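/- Let ζ₁, ..., ζ_{2n} be complex numbers satisfying ζ₁^l − ζ₂^l + ⋯ + ζ_{2n−1}^l − ζ_{2n}^l = 0 for l = 0, 1, ..., 2n−1. Then there is a bijection σ from odd indices {1,3,...,2n−1} to even indices {2,4,...,2n} with ζ_i = ζ_{σ(i)} for all odd i; consequently the alternating power sum ζ₁^k − ζ₂^k + ⋯ − ζ_{2n}^k vanishes for every integer k. -/

import Mathlib

open Finset

private lemma two_mul_val_lt_aux {n : ℕ} (j : Fin n) : 2 * (j : ℕ) < 2 * n := by
  have := j.isLt; omega

private lemma sum_range_two_mul_aux {M : Type*} [AddCommMonoid M] (G : ℕ → M) (m : ℕ) :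
    ∑ i ∈ Finset.range (2 * m), G i = ∑ j ∈ Finset.range m, (G (2 * j) + G (2 * j + 1)) := by
  induction m with
  | zero => simp
  | succ m ih =>
    have h2 : 2 * (m + 1) = (2 * m + 1) + 1 := by ring
    rw [h2, Finset.sum_range_succ, Finset.sum_range_succ, ih, Finset.sum_range_succ, add_assoc]

private lemma split_parity_sum {M : Type*} [AddCommMonoid M] (n : ℕ) (F : Fin (2 * n) → M) :
    ∑ i : Fin (2 * n), F i
      = ∑ j : Fin n, (F ⟨2 * (j : ℕ), two_mul_val_lt_aux j⟩
          + F ⟨2 * (j : ℕ) + 1, by have := j.isLt; omega⟩) := by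
  classical
  set G : ℕ → M := fun m => if h : m < 2 * n then F ⟨m, h⟩ else 0 with hG
  have h1 : ∑ i : Fin (2 * n), F i = ∑ i ∈ Finset.range (2 * n), G i := by
    rw [← Fin.sum_univ_eq_sum_range]
    exact Finset.sum_congr rfl fun i _ => by simp [hG, i.isLt]
  rw [h1, sum_range_two_mul_aux, ← Fin.sum_univ_eq_sum_range (fun j => G (2 * j) + G (2 * j + 1))]
  refine Finset.sum_congr rfl fun j _ => ?_
  have hj := j.isLt
  simp only [hG]
  rw [dif_pos (by omega : 2 * (j : ℕ) < 2 * n), dif_pos (by omega : 2 * (j : ℕ) + 1 < 2 * n)]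

private lemma alt_split {n : ℕ} (F : Fin (2 * n) → ℂ) :
    ∑ i : Fin (2 * n), (-1 : ℂ) ^ (i : ℕ) * F i
      = ∑ j : Fin n, (F ⟨2 * (j : ℕ), two_mul_val_lt_aux j⟩
          - F ⟨2 * (j : ℕ) + 1, by have := j.isLt; omega⟩) := by
  refine (split_parity_sum n (fun i : Fin (2 * n) => (-1 : ℂ) ^ (i : ℕ) * F i)).trans ?_
  refine Finset.sum_congr rfl fun j _ => ?_
  show (-1 : ℂ) ^ (2 * (j : ℕ)) * F ⟨2 * (j : ℕ), two_mul_val_lt_aux j⟩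
      + (-1 : ℂ) ^ (2 * (j : ℕ) + 1) * F ⟨2 * (j : ℕ) + 1, by have := j.isLt; omega⟩
    = F ⟨2 * (j : ℕ), two_mul_val_lt_aux j⟩
      - F ⟨2 * (j : ℕ) + 1, by have := j.isLt; omega⟩
  have e1 : ((-1 : ℂ)) ^ (2 * (j : ℕ)) = 1 := by rw [pow_mul]; norm_num
  have e2 : ((-1 : ℂ)) ^ (2 * (j : ℕ) + 1) = -1 := by rw [pow_succ, e1, one_mul]
  rw [e1, e2, one_mul, neg_one_mul, ← sub_eq_add_neg]

private lemma exists_perm_of_map_eq {α : Type*} : ∀ {n : ℕ} (f g : Fin n → α),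
    Multiset.map f Finset.univ.val = Multiset.map g Finset.univ.val →
    ∃ σ : Equiv.Perm (Fin n), ∀ i, f i = g (σ i) := by
  intro n
  induction n with
  | zero => exact fun f g _ => ⟨Equiv.refl _, fun i => i.elim0⟩
  | succ n ih =>
    intro f g hm
    have h0 : f 0 ∈ Multiset.map g Finset.univ.val := by
      rw [← hm]
      exact Multiset.mem_map_of_mem f (Finset.mem_univ_val _)
    obtain ⟨j, -, hj⟩ := Multiset.mem_map.mp h0
    set g' : Fin (n + 1) → α := g ∘ (Equiv.swap 0 j) with hg'
    have hg'univ : Multiset.map g' Finset.univ.val = Multiset.map g Finset.univ.val := by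
      rw [hg']
      rw [← Multiset.map_map g (⇑(Equiv.swap 0 j))]
      rw [Multiset.map_univ_val_equiv (Equiv.swap 0 j)]
    have huniv : (Finset.univ : Finset (Fin (n + 1))).val
        = 0 ::ₘ Multiset.map Fin.succ Finset.univ.val := by
      rw [Fin.univ_succ, Finset.cons_val, Finset.map_val]
      rfl
    have hdec : ∀ F : Fin (n + 1) → α, Multiset.map F Finset.univ.val
        = F 0 ::ₘ Multiset.map (F ∘ Fin.succ) Finset.univ.val := by
      intro F
      rw [huniv, Multiset.map_cons, Multiset.map_map]
    have hg'0 : g' 0 = f 0 := by simp [hg', hj]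
    have htails : Multiset.map (f ∘ Fin.succ) Finset.univ.val
        = Multiset.map (g' ∘ Fin.succ) Finset.univ.val := by
      have hmm := hm.trans hg'univ.symm
      rw [hdec f, hdec g', hg'0] at hmm
      exact (Multiset.cons_inj_right _).mp hmm
    obtain ⟨τ, hτ⟩ := ih (f ∘ Fin.succ) (g' ∘ Fin.succ) htails
    refine ⟨Equiv.Perm.decomposeFin.symm (j, τ), fun i => ?_⟩
    refine Fin.cases ?_ (fun k => ?_) i
    · rw [Equiv.Perm.decomposeFin_symm_apply_zero, ← hj]
    · rw [Equiv.Perm.decomposeFin_symm_apply_succ]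
      exact hτ k

theorem stmt8 (n : ℕ) (hn : 0 < n) (ζ : Fin (2 * n) → ℂ) (hζ : ∀ i, ζ i ≠ 0)
    (h : ∀ l : ℕ, l < 2 * n → ∑ i : Fin (2 * n), (-1 : ℂ) ^ (i : ℕ) * ζ i ^ l = 0) :
    (∃ σ : Equiv.Perm (Fin n), ∀ i : Fin n,
        ζ ⟨2 * (i : ℕ), by have := i.isLt; omega⟩ =
          ζ ⟨2 * ((σ i : Fin n) : ℕ) + 1, by have := (σ i).isLt; omega⟩) ∧
    ∀ k : ℤ, ∑ i : Fin (2 * n), (-1 : ℂ) ^ (i : ℕ) * ζ i ^ k = 0 := by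
  classical
  set s : Finset ℂ := Finset.image ζ Finset.univ with hs
  have hsinj : Set.InjOn id (s : Set ℂ) := Set.injOn_id _
  -- Step A: alternating sums of polynomial evaluations of degree < 2n vanish
  have stepA : ∀ P : Polynomial ℂ, P.natDegree < 2 * n →
      ∑ i : Fin (2 * n), (-1 : ℂ) ^ (i : ℕ) * P.eval (ζ i) = 0 := by
    intro P hP
    calc ∑ i : Fin (2 * n), (-1 : ℂ) ^ (i : ℕ) * P.eval (ζ i)
        = ∑ i : Fin (2 * n), ∑ l ∈ Finset.range (2 * n),
            P.coeff l * ((-1 : ℂ) ^ (i : ℕ) * ζ i ^ l) := by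
          refine Finset.sum_congr rfl fun i _ => ?_
          rw [Polynomial.eval_eq_sum_range' hP, Finset.mul_sum]
          exact Finset.sum_congr rfl fun l _ => by ring
      _ = ∑ l ∈ Finset.range (2 * n), P.coeff l
            * ∑ i : Fin (2 * n), (-1 : ℂ) ^ (i : ℕ) * ζ i ^ l := by
          rw [Finset.sum_comm]
          exact Finset.sum_congr rfl fun l _ => by rw [Finset.mul_sum]
      _ = 0 := Finset.sum_eq_zero fun l hl => by
          rw [h l (Finset.mem_range.mp hl), mul_zero]
  -- Step B: for each value z, the signed count of indices with ζ i = z vanishes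
  have stepB : ∀ z : ℂ,
      ∑ i : Fin (2 * n), (if ζ i = z then (-1 : ℂ) ^ (i : ℕ) else 0) = 0 := by
    intro z
    by_cases hz : z ∈ s
    · have hscard : s.card ≤ 2 * n := le_trans Finset.card_image_le (by simp)
      have hcardpos : 0 < s.card := Finset.card_pos.mpr ⟨z, hz⟩
      have hdeg : (Lagrange.basis s id z).natDegree < 2 * n := by
        rw [Lagrange.natDegree_basis hsinj hz]; omega
      refine Eq.trans ?_ (stepA _ hdeg)
      refine Finset.sum_congr rfl fun i _ => ?_
      by_cases hiz : ζ i = z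
      · rw [if_pos hiz, hiz]
        have he := Lagrange.eval_basis_self hsinj hz
        simp only [id] at he
        rw [he, mul_one]
      · rw [if_neg hiz]
        have hmem : ζ i ∈ s := Finset.mem_image_of_mem ζ (Finset.mem_univ i)
        have he := Lagrange.eval_basis_of_ne (s := s) (v := id) (i := z) (j := ζ i)
          (fun e => hiz e.symm) hmem
        simp only [id] at he
        rw [he, mul_zero]
    · refine Finset.sum_eq_zero fun i _ => if_neg fun e => hz ?_
      rw [← e]
      exact Finset.mem_image_of_mem ζ (Finset.mem_univ i)
  -- the even- and odd-indexed subsequences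
  set f : Fin n → ℂ := fun j => ζ ⟨2 * (j : ℕ), by have := j.isLt; omega⟩ with hf
  set g : Fin n → ℂ := fun j => ζ ⟨2 * (j : ℕ) + 1, by have := j.isLt; omega⟩ with hg
  -- Step C: the counts of each value agree
  have key : ∀ z : ℂ, #(Finset.univ.filter fun j : Fin n => f j = z)
      = #(Finset.univ.filter fun j : Fin n => g j = z) := by
    intro z
    have h1 : ∑ i : Fin (2 * n), (-1 : ℂ) ^ (i : ℕ) * (if ζ i = z then (1 : ℂ) else 0) = 0 := by
      refine Eq.trans ?_ (stepB z)
      refine Finset.sum_congr rfl fun i _ => ?_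
      rw [mul_ite, mul_one, mul_zero]
    have h2 := (alt_split (fun i : Fin (2 * n) => if ζ i = z then (1 : ℂ) else 0)).symm.trans h1
    beta_reduce at h2
    rw [Finset.sum_sub_distrib, sub_eq_zero, Finset.sum_boole, Finset.sum_boole] at h2
    exact Nat.cast_inj (R := ℂ) |>.mp h2
  -- multiset equality and the permutation
  have hmul : Multiset.map f Finset.univ.val = Multiset.map g Finset.univ.val := by
    have hc : ∀ (F : Fin n → ℂ) (z : ℂ), Multiset.count z (Multiset.map F Finset.univ.val)
        = #(Finset.univ.filter fun j : Fin n => F j = z) := by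
      intro F z
      rw [Multiset.count_map]
      have hfc : Multiset.filter (fun a => z = F a) Finset.univ.val
          = Multiset.filter (fun j => F j = z) Finset.univ.val :=
        Multiset.filter_congr fun a _ => by simp [eq_comm]
      rw [hfc]
      rfl
    refine Multiset.ext.mpr fun z => ?_
    rw [hc f z, hc g z, key z]
  obtain ⟨σ, hσ⟩ := exists_perm_of_map_eq f g hmul
  refine ⟨⟨σ, fun i => hσ i⟩, fun k => ?_⟩
  -- Step D: all integer alternating power sums vanish
  refine (alt_split (fun i : Fin (2 * n) => ζ i ^ k)).trans ?_
  beta_reduce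
  rw [Finset.sum_sub_distrib, sub_eq_zero]
  show ∑ j : Fin n, f j ^ k = ∑ j : Fin n, g j ^ k
  calc ∑ j : Fin n, f j ^ k
      = ∑ j : Fin n, g (σ j) ^ k := Finset.sum_congr rfl fun j _ => by rw [hσ j]
    _ = ∑ j : Fin n, g j ^ k := Equiv.sum_comp σ (fun j => g j ^ k)
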